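/- Let q be a prime power and let C be an optimal (n,k,r) LRC over F_q with k > r ≥ 1, ⌈k/r⌉ ≥ 2 and minimum distance d = n − k − ⌈k/r⌉ + 2. Let H be an (n−k)×n parity-check matrix of C whose rows form a basis of the dual code C⊥, and suppose the first l rows of H (the locality-rows) each have Hamming weight at most r+1 and their supports together cover all n coordinates. Fix any set D of ⌈k/r⌉ − 2 of these locality-rows, and let H'' be the matrix obtained from H by deleting the rows in D and all columns lying in the support of some row of D; let n'' be the number of remaining columns and let C'' = {x ∈ F_q^{n''} : H'' x^T = 0} be the linear code with parity-check matrix H''. Then C'' is an almost MDS code with minimum distance d'' = n'' − dim(C'') = d; in particular H'' has full rank n − k − (⌈k/r⌉ − 2). -/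

import Mathlib

noncomputable def wt {F : Type*} [Zero F] {ι : Type*} (x : ι → F) : ℕ :=
  {i | x i ≠ 0}.ncard

def dualCode {F : Type*} [Field F] {n : ℕ} (C : Submodule F (Fin n → F)) :
    Submodule F (Fin n → F) where
  carrier := {y | ∀ x ∈ C, ∑ i, x i * y i = 0}
  add_mem' := by
    intro a b ha hb
    simp only [Set.mem_setOf_eq] at *
    intro z hz
    simp [Pi.add_apply, mul_add, Finset.sum_add_distrib, ha z hz, hb z hz]
  zero_mem' := by
    intro z hz
    simp
  smul_mem' := by
    intro c a ha
    simp only [Set.mem_setOf_eq] at *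
    intro z hz
    have h : ∀ i, z i * (c • a) i = c * (z i * a i) := by
      intro i; simp [smul_eq_mul]; ring
    simp only [h, ← Finset.mul_sum, ha z hz, mul_zero]

def isMinDist {F : Type*} [Field F] {ι : Type*} (C : Submodule F (ι → F)) (d : ℕ) : Prop :=
  (∃ x ∈ C, x ≠ 0 ∧ wt x = d) ∧ ∀ x ∈ C, x ≠ 0 → d ≤ wt x

def hasLocality {F : Type*} [Field F] {n : ℕ} (C : Submodule F (Fin n → F)) (r : ℕ) : Prop :=
  ∀ i : Fin n, ∃ h ∈ dualCode C, h i ≠ 0 ∧ wt h ≤ r + 1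

abbrev GF4 := GaloisField 2 2

def ceilDiv (a b : ℕ) : ℕ := (a + b - 1) / b

lemma wt_eq_card {F : Type*} [Zero F] {ι : Type*} [Fintype ι] [DecidableEq F] (x : ι → F) :
    wt x = (Finset.univ.filter (fun i => x i ≠ 0)).card := by
  classical
  rw [wt, Set.ncard_eq_toFinset_card']
  congr 1
  ext i; simp

lemma wt_restrict_le {F : Type*} [Zero F] {ι : Type*} [Fintype ι] (s : Finset ι) (h : ι → F) :
    wt (fun j : {j // j ∈ s} => h j.1) ≤ wt h := by
  classical
  rw [wt, wt]
  rw [← Set.ncard_image_of_injective {j : {j // j ∈ s} | h j.1 ≠ 0} Subtype.val_injective]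
  exact Set.ncard_le_ncard (by rintro _ ⟨a, ha, rfl⟩; exact ha) (Set.toFinite _)

lemma wt_extend {F : Type*} [Zero F] {ι : Type*} (K : Finset ι) [DecidablePred (· ∈ K)]
    (x : {j // j ∈ K} → F) :
    wt (fun j => if hj : j ∈ K then x ⟨j, hj⟩ else 0) = wt x := by
  classical
  rw [wt, wt]
  rw [← Set.ncard_image_of_injective {j : {j // j ∈ K} | x j ≠ 0} Subtype.val_injective]
  congr 1
  ext j
  constructor
  · intro hj
    simp only [Set.mem_setOf_eq] at hj
    by_cases hK : j ∈ K
    · exact ⟨⟨j, hK⟩, by simpa [hK] using hj, rfl⟩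
    · simp [hK] at hj
  · rintro ⟨a, ha, rfl⟩
    simpa [a.2] using ha

lemma no_mds_with_locality {F : Type*} [Field F] {ι : Type*} [Fintype ι] [DecidableEq ι]
    (C' : Submodule F (ι → F)) (h : ι → F)
    (hdual : ∀ x ∈ C', ∑ i, x i * h i = 0)
    {j0 : ι} (hj0 : h j0 ≠ 0)
    (hwt : wt h ≤ Module.finrank F C')
    (hmin : ∀ x ∈ C', x ≠ 0 → Fintype.card ι - Module.finrank F C' + 1 ≤ wt x) :
    False := by
  classical
  set k'' := Module.finrank F C' with hk''
  have hkle : k'' ≤ Fintype.card ι := by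
    have := Submodule.finrank_le C'
    rwa [Module.finrank_pi] at this
  set S : Finset ι := {i | h i ≠ 0}.toFinset with hS
  have hScard : S.card = wt h := by
    rw [wt, Set.ncard_eq_toFinset_card']
  obtain ⟨T, hST, hTcard⟩ := Finset.exists_superset_card_eq (hScard ▸ hwt) hkle
  set π : C' →ₗ[F] ({j // j ∈ T} → F) :=
    (LinearMap.funLeft F F (fun j : {j // j ∈ T} => (j : ι))).comp C'.subtype with hπ
  have hπapply : ∀ (x : C') (j : {j // j ∈ T}), π x j = (x : ι → F) j.1 := fun x j => rfl
  have hker : LinearMap.ker π = ⊥ := by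
    rw [LinearMap.ker_eq_bot']
    intro x hx
    by_contra hx0
    have hx1 : (x : ι → F) ≠ 0 := fun hh => hx0 (Subtype.ext hh)
    have hmin' := hmin x x.2 hx1
    have hsub : (Finset.univ.filter (fun i => (x : ι → F) i ≠ 0)) ⊆ Finset.univ \ T := by
      intro i hi
      simp only [Finset.mem_filter, Finset.mem_univ, true_and] at hi
      simp only [Finset.mem_sdiff, Finset.mem_univ, true_and]
      intro hiT
      exact hi (by simpa [hπapply] using congrFun hx ⟨i, hiT⟩)
    have hle := Finset.card_le_card hsub
    rw [Finset.card_sdiff_of_subset (Finset.subset_univ T), Finset.card_univ, hTcard] at hle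
    rw [wt_eq_card] at hmin'
    omega
  have htop : LinearMap.range π = ⊤ := by
    apply Submodule.eq_top_of_finrank_eq
    have h1 := LinearMap.finrank_range_add_finrank_ker π
    rw [hker, finrank_bot, Nat.add_zero] at h1
    rw [h1, Module.finrank_pi, Fintype.card_coe, hTcard]
  have hsurj : Function.Surjective π := LinearMap.range_eq_top.mp htop
  obtain ⟨x, hx⟩ := hsurj (fun j => if (j : ι) = j0 then (1 : F) else 0)
  have hj0T : j0 ∈ T := hST (by simp [hS, hj0])
  have h0 := hdual x x.2
  have hzero : ∀ i ∈ Finset.univ, i ∉ T → (x : ι → F) i * h i = 0 := by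
    intro i _ hiT
    have : h i = 0 := by
      by_contra hne
      exact hiT (hST (by simp [hS, hne]))
    rw [this, mul_zero]
  rw [← Finset.sum_subset (Finset.subset_univ T) hzero] at h0
  have hxT : ∀ i ∈ T, (x : ι → F) i * h i = if i = j0 then h i else 0 := by
    intro i hi
    have := congrFun hx ⟨i, hi⟩
    rw [hπapply] at this
    rw [this]
    split_ifs <;> simp
  rw [Finset.sum_congr rfl hxT, Finset.sum_ite_eq' T j0 h] at h0
  rw [if_pos hj0T] at h0
  exact hj0 h0

/-- deleting ⌈k/r⌉ − 2 locality-rows (and the columns they cover)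
from a parity-check matrix of an optimal (n,k,r) LRC yields the parity-check matrix
of an almost MDS code of minimum distance d; in particular the resulting matrix has
full rank n − k − (⌈k/r⌉ − 2). -/
theorem stmt_4 (q n k r l : ℕ) (hq : IsPrimePow q)
    (F : Type) [Field F] [Fintype F] [DecidableEq F] (hF : Fintype.card F = q)
    (hr : 1 ≤ r) (hk : r < k) (hceil : 2 ≤ ceilDiv k r)
    (C : Submodule F (Fin n → F)) (hdim : Module.finrank F C = k)
    (d : ℕ) (hd : d = n - k - ceilDiv k r + 2)
    (hmd : isMinDist C d) (hloc : hasLocality C r)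
    (H : Matrix (Fin (n - k)) (Fin n) F)
    -- the rows of H form a basis of the dual code of C
    (hHind : LinearIndependent F (fun i : Fin (n - k) => (fun j => H i j)))
    (hHspan : Submodule.span F (Set.range (fun i : Fin (n - k) => (fun j => H i j))) = dualCode C)
    -- the first l rows of H are locality-rows: weight at most r+1, supports covering all coordinates
    (hl : l ≤ n - k)
    (hlocrows : ∀ i : Fin (n - k), i.val < l → wt (fun j => H i j) ≤ r + 1)
    (hcover : ∀ j : Fin n, ∃ i : Fin (n - k), i.val < l ∧ H i j ≠ 0)
    -- D is any set of ⌈k/r⌉ − 2 locality-rows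
    (D : Finset (Fin (n - k))) (hD : ∀ i ∈ D, i.val < l)
    (hDcard : D.card = ceilDiv k r - 2) :
    -- K : the columns remaining after deleting every column in the support of some row of D
    let K : Finset (Fin n) := Finset.univ.filter (fun j => ∀ i ∈ D, H i j = 0)
    -- H'' : the matrix obtained from H by deleting the rows of D and the deleted columns
    let H'' : Matrix {i : Fin (n - k) // i ∉ D} {j : Fin n // j ∈ K} F :=
      fun i j => H i.1 j.1
    -- C'' : the linear code with parity-check matrix H''
    let C'' : Submodule F ({j : Fin n // j ∈ K} → F) := LinearMap.ker H''.mulVecLin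
    isMinDist C'' d ∧ K.card - Module.finrank F C'' = d ∧
      H''.rank = n - k - (ceilDiv k r - 2) := by
  classical
  intro K H'' C''
  set c := ceilDiv k r with hc
  set t := D.card with ht'
  have htc : t = c - 2 := hDcard
  -- arithmetic facts about c, t, r, k
  have hcr : c * r ≤ k + r - 1 := by
    have := Nat.div_mul_le_self (k + r - 1) r
    simpa [hc, ceilDiv] using this
  have htr : t * r = c * r - 2 * r := by rw [htc, Nat.sub_mul]
  have hkn : k ≤ n := by
    have h1 := Submodule.finrank_le C
    rwa [hdim, Module.finrank_pi, Fintype.card_fin] at h1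
  have hKmem : ∀ j : Fin n, (j ∈ K ↔ ∀ i ∈ D, H i j = 0) := by
    intro j
    simp [K]
  -- bound on number of deleted columns
  have hnn : n ≤ K.card + (t * r + t) := by
    have hsub : Finset.univ \ K ⊆ D.biUnion (fun i => Finset.univ.filter (fun j => H i j ≠ 0)) := by
      intro j hj
      simp only [Finset.mem_sdiff, Finset.mem_univ, true_and] at hj
      rw [hKmem j] at hj
      push_neg at hj
      obtain ⟨i, hiD, hij⟩ := hj
      exact Finset.mem_biUnion.mpr ⟨i, hiD, by simp [hij]⟩
    have h1 := Finset.card_le_card hsub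
    have h2 := Finset.card_biUnion_le (s := D)
      (t := fun i => Finset.univ.filter (fun j => H i j ≠ 0))
    have h3 : ∀ i ∈ D, (Finset.univ.filter (fun j => H i j ≠ 0)).card ≤ r + 1 := by
      intro i hi
      rw [← wt_eq_card]
      exact hlocrows i (hD i hi)
    have h4 : ∑ i ∈ D, (Finset.univ.filter (fun j => H i j ≠ 0)).card ≤ t * (r + 1) := by
      calc ∑ i ∈ D, (Finset.univ.filter (fun j => H i j ≠ 0)).card
          ≤ ∑ _i ∈ D, (r + 1) := Finset.sum_le_sum h3
        _ = t * (r + 1) := by rw [Finset.sum_const, smul_eq_mul]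
    have h5 : (Finset.univ \ K).card = n - K.card := by
      rw [Finset.card_sdiff_of_subset (Finset.subset_univ K), Finset.card_univ, Fintype.card_fin]
    have h6 : K.card ≤ n := by
      simpa using Finset.card_le_univ K
    have : n - K.card ≤ t * (r + 1) := by
      rw [← h5]; exact le_trans h1 (le_trans h2 h4)
    have ht1 : t * (r + 1) = t * r + t := by ring
    omega
  -- C equals the kernel of H
  have hrows : ∀ i : Fin (n - k), (fun j => H i j) ∈ dualCode C := by
    intro i
    rw [← hHspan]
    exact Submodule.subset_span ⟨i, rfl⟩
  have hCle : C ≤ LinearMap.ker H.mulVecLin := by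
    intro x hx
    rw [LinearMap.mem_ker]
    funext i
    have := hrows i x hx
    simpa [Matrix.mulVecLin_apply, Matrix.mulVec, dotProduct, mul_comm] using this
  have hrankH : H.rank = n - k := by
    rw [← Matrix.rank_transpose, Matrix.rank, Matrix.range_mulVecLin]
    have := finrank_span_eq_card hHind
    rw [Fintype.card_fin] at this
    exact this
  have hCker : C = LinearMap.ker H.mulVecLin := by
    apply Submodule.eq_of_le_of_finrank_le hCle
    have h1 := LinearMap.finrank_range_add_finrank_ker H.mulVecLin
    rw [Module.finrank_pi, Fintype.card_fin] at h1
    have h2 : Module.finrank F (LinearMap.range H.mulVecLin) = n - k := hrankH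
    rw [hdim]
    omega
  -- the extension map
  set E : ({j : Fin n // j ∈ K} → F) → (Fin n → F) :=
    fun x j => if hj : j ∈ K then x ⟨j, hj⟩ else 0 with hE
  have hEC : ∀ x ∈ C'', E x ∈ C := by
    intro x hx
    rw [hCker, LinearMap.mem_ker]
    funext i
    have hsum : (H.mulVecLin (E x)) i = ∑ j : {j : Fin n // j ∈ K}, H i j.1 * x j := by
      rw [Matrix.mulVecLin_apply, Matrix.mulVec]
      show ∑ j, H i j * E x j = _
      rw [← Finset.sum_subset (Finset.subset_univ K)
        (fun j _ hjK => by simp [hE, dif_neg hjK])]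
      rw [← Finset.sum_coe_sort K (fun j => H i j * E x j)]
      exact Finset.sum_congr rfl (fun j _ => by simp [hE, dif_pos j.2])
    by_cases hiD : i ∈ D
    · have : ∀ j : {j : Fin n // j ∈ K}, H i j.1 = 0 := fun j => (hKmem j.1).mp j.2 i hiD
      show (H.mulVecLin (E x)) i = 0
      rw [hsum]
      simp [this]
    · have hx' : H''.mulVecLin x = 0 := hx
      have := congrFun hx' ⟨i, hiD⟩
      show (H.mulVecLin (E x)) i = 0
      rw [hsum]
      rw [Matrix.mulVecLin_apply] at this
      simpa [Matrix.mulVecLin_apply, Matrix.mulVec, dotProduct, H''] using this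
  have hEne : ∀ x : {j : Fin n // j ∈ K} → F, x ≠ 0 → E x ≠ 0 := by
    intro x hx0 hEx
    apply hx0
    funext j
    have := congrFun hEx j.1
    simpa [hE, dif_pos j.2] using this
  have hEwt : ∀ x : {j : Fin n // j ∈ K} → F, wt (E x) = wt x := fun x => wt_extend K x
  -- lower bound on weights in C''
  have hlow : ∀ x ∈ C'', x ≠ 0 → d ≤ wt x := by
    intro x hx hx0
    rw [← hEwt x]
    exact hmd.2 (E x) (hEC x hx) (hEne x hx0)
  -- rank and kernel dimensions
  set ρ := H''.rank with hρ
  set k'' := Module.finrank F C'' with hk''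
  have hrn : ρ + k'' = K.card := by
    have h1 := LinearMap.finrank_range_add_finrank_ker H''.mulVecLin
    rw [Module.finrank_pi, Fintype.card_coe] at h1
    exact h1
  have hρle : ρ ≤ (n - k) - t := by
    have h1 := Matrix.rank_le_card_height H''
    rwa [Fintype.card_subtype_compl, Fintype.card_fin, Fintype.card_coe] at h1
  have hk''r : r + 1 ≤ k'' := by
    have h1 : t ≤ n - k := by
      simpa using Finset.card_le_univ D
    omega
  -- K is nonempty; get a locality row for C''
  have hKpos : 0 < K.card := by omega
  obtain ⟨j0, hj0K⟩ := Finset.card_pos.mp hKpos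
  have hlocC'' : ∃ h'' : {j : Fin n // j ∈ K} → F,
      (∀ x ∈ C'', ∑ j, x j * h'' j = 0) ∧ h'' ⟨j0, hj0K⟩ ≠ 0 ∧ wt h'' ≤ r + 1 := by
    obtain ⟨i, hil, hij⟩ := hcover j0
    have hiD : i ∉ D := fun hid => hij ((hKmem j0).mp hj0K i hid)
    refine ⟨fun j => H i j.1, ?_, hij, ?_⟩
    · intro x hx
      have hx' : H''.mulVecLin x = 0 := hx
      have := congrFun hx' ⟨i, hiD⟩
      rw [Matrix.mulVecLin_apply] at this
      simpa [Matrix.mulVecLin_apply, Matrix.mulVec, dotProduct, H'', mul_comm] using this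
    · exact le_trans (wt_restrict_le K (fun j => H i j)) (hlocrows i hil)
  obtain ⟨h'', hdual'', hne'', hwt''⟩ := hlocC''
  have hcardK : Fintype.card {j : Fin n // j ∈ K} = K.card := Fintype.card_coe K
  -- rank is at least d
  have hdρ : d ≤ ρ := by
    by_contra hlt
    push_neg at hlt
    apply no_mds_with_locality C'' h'' hdual'' hne''
    · rw [← hk'']; omega
    · intro x hx hx0
      have := hlow x hx hx0
      rw [hcardK, ← hk'']
      omega
  -- existence of a codeword of weight exactly d
  have hex : ∃ x ∈ C'', x ≠ 0 ∧ wt x = d := by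
    by_contra hno
    push_neg at hno
    apply no_mds_with_locality C'' h'' hdual'' hne''
    · rw [← hk'']; omega
    · intro x hx hx0
      have h1 := hlow x hx hx0
      have h2 := hno x hx hx0
      rw [hcardK, ← hk'']
      omega
  refine ⟨⟨hex, hlow⟩, ?_, ?_⟩
  · omega
  · show ρ = n - k - (c - 2)
    omega
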